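/- arXiv:2307.07617 — 4 statements merged into one kernel-verified Lean document; each statement's English description precedes it below -/
import Mathlib

section
/- Let X be a finite nonempty index set and I ⊆ X a nonempty subset (the 'interior' points). For each i ∈ I let w_i : X → ℝ be a row of weights satisfying: (i) w_i(i) < 0; (ii) w_i(j) ≥ 0 for every j ≠ i; (iii) ∑_{j ∈ X} w_i(j) = 0. For v : X → ℝ define (Lv)(i) := ∑_{j ∈ X} w_i(j) v(j) for i ∈ I. Define the boundary-neighbor set B := { j ∈ X \ I : w_i(j) ≠ 0 for some i ∈ I }. Assume the connectivity condition: for every i ∈ I there is a finite chain i = i_0, i_1, …, i_m with i_r ∈ I and w_{i_r}(i_{r+1}) > 0 for every r < m, and i_m ∈ B. If v : X → ℝ satisfies (Lv)(i) ≥ 0 for every i ∈ I, then max_{j ∈ I ∪ B} v(j) = max_{j ∈ B} v(j); that is, the maximum of v over I ∪ B is attained on B. -/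
/-- **Discrete maximum principle** (Lemma 4.3): for diagonally dominant weight rows with
zero row sums at the interior points `I`, under the connectivity condition linking every
interior point to the boundary-neighbor set `B`, any `v` with `(Lv)(i) ≥ 0` on `I`
attains its maximum over `I ∪ B` on `B`. -/
theorem discrete_maximum_principle
    {X : Type*} [Fintype X] [DecidableEq X] [Nonempty X]
    (I : Finset X) (hI : I.Nonempty)
    (w : X → X → ℝ)
    (hdiag : ∀ i ∈ I, w i i < 0)
    (hoff : ∀ i ∈ I, ∀ j, j ≠ i → 0 ≤ w i j)
    (hsum : ∀ i ∈ I, ∑ j, w i j = 0)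
    (B : Finset X)
    (hB : ∀ j, j ∈ B ↔ j ∉ I ∧ ∃ i ∈ I, w i j ≠ 0)
    (hconn : ∀ i ∈ I, ∃ (m : ℕ) (c : ℕ → X),
      c 0 = i ∧ (∀ r < m, c r ∈ I) ∧ (∀ r < m, 0 < w (c r) (c (r + 1))) ∧ c m ∈ B)
    (v : X → ℝ)
    (hLv : ∀ i ∈ I, 0 ≤ ∑ j, w i j * v j) :
    ∃ hBne : B.Nonempty,
      (I ∪ B).sup' (hI.mono Finset.subset_union_left) v = B.sup' hBne v := by
  -- B is nonempty thanks to connectivity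
  obtain ⟨i0, hi0⟩ := id hI
  obtain ⟨m0, c0, _, _, _, hc0B⟩ := hconn i0 hi0
  have hBne : B.Nonempty := ⟨c0 m0, hc0B⟩
  refine ⟨hBne, ?_⟩
  set hSne : (I ∪ B).Nonempty := hI.mono Finset.subset_union_left
  set M : ℝ := (I ∪ B).sup' hSne v with hM
  have hle : ∀ j ∈ I ∪ B, v j ≤ M := fun j hj => Finset.le_sup' v hj
  -- key propagation lemma
  have key : ∀ i ∈ I, v i = M → ∀ j, 0 < w i j → j ∈ I ∪ B ∧ v j = M := by
    intro i hi hvi j hwj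
    have hjne : j ≠ i := by
      rintro rfl; exact absurd hwj (not_lt.mpr (le_of_lt (hdiag _ hi)))
    have hjmem : j ∈ I ∪ B := by
      by_cases hjI : j ∈ I
      · exact Finset.mem_union_left _ hjI
      · exact Finset.mem_union_right _ ((hB j).mpr ⟨hjI, i, hi, ne_of_gt hwj⟩)
    refine ⟨hjmem, ?_⟩
    have hterm : ∀ k ∈ Finset.univ, w i k * (v k - v i) ≤ 0 := by
      intro k _
      by_cases hk : k = i
      · subst hk; simp
      by_cases hwk : w i k = 0
      · simp [hwk]
      · have hkmem : k ∈ I ∪ B := by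
          by_cases hkI : k ∈ I
          · exact Finset.mem_union_left _ hkI
          · exact Finset.mem_union_right _ ((hB k).mpr ⟨hkI, i, hi, hwk⟩)
        have h1 : 0 ≤ w i k := hoff i hi k hk
        have h2 : v k - v i ≤ 0 := by
          have := hle k hkmem; rw [hvi]; linarith
        exact mul_nonpos_of_nonneg_of_nonpos h1 h2
    have hsum' : ∑ k, w i k * (v k - v i) = ∑ k, w i k * v k := by
      simp only [mul_sub]
      rw [Finset.sum_sub_distrib, ← Finset.sum_mul, hsum i hi]
      ring
    have hzero : ∑ k, w i k * (v k - v i) = 0 :=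
      le_antisymm (Finset.sum_nonpos hterm) (by rw [hsum']; exact hLv i hi)
    have hall := (Finset.sum_eq_zero_iff_of_nonpos hterm).mp hzero j (Finset.mem_univ j)
    have : v j - v i = 0 := by
      rcases mul_eq_zero.mp hall with h | h
      · exact absurd h (ne_of_gt hwj)
      · exact h
    rw [← hvi]; linarith
  -- get a maximizer
  obtain ⟨x, hx, hvx⟩ := Finset.exists_mem_eq_sup' hSne v
  have hvx : v x = M := hvx.symm
  -- produce a boundary maximizer
  have hbmax : ∃ b ∈ B, v b = M := by
    rcases Finset.mem_union.mp hx with hxI | hxB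
    · obtain ⟨m, c, hc0, hcI, hcw, hcm⟩ := hconn x hxI
      have hchain : ∀ r, r ≤ m → v (c r) = M := by
        intro r
        induction r with
        | zero => intro _; rw [hc0]; exact hvx
        | succ n ih =>
          intro hnm
          have hn : n < m := Nat.lt_of_succ_le hnm
          have := key (c n) (hcI n hn) (ih (le_of_lt hn)) (c (n + 1)) (hcw n hn)
          exact this.2
      exact ⟨c m, hcm, hchain m le_rfl⟩
    · exact ⟨x, hxB, hvx⟩
  obtain ⟨b, hb, hvb⟩ := hbmax
  apply le_antisymm
  · rw [← hvb]; exact Finset.le_sup' v hb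
  · exact Finset.sup'_mono v Finset.subset_union_right hBne
end

section
/- Let X be a finite nonempty index set and I ⊆ X a nonempty subset (the 'interior' points). For each i ∈ I let w_i : X → ℝ be a row of weights satisfying: (i) w_i(i) < 0; (ii) w_i(j) ≥ 0 for every j ≠ i; (iii) ∑_{j ∈ X} w_i(j) = 0. For v : X → ℝ define (Lv)(i) := ∑_{j ∈ X} w_i(j) v(j) for i ∈ I. Define the boundary-neighbor set B := { j ∈ X \ I : w_i(j) ≠ 0 for some i ∈ I }. Assume the connectivity condition: for every i ∈ I there is a finite chain i = i_0, i_1, …, i_m with i_r ∈ I and w_{i_r}(i_{r+1}) > 0 for every r < m, and i_m ∈ B. If v : X → ℝ satisfies (Lv)(i) ≤ 0 for every i ∈ I, then min_{j ∈ I ∪ B} v(j) = min_{j ∈ B} v(j); that is, the minimum of v over I ∪ B is attained on B. -/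
/-- **Discrete minimum principle** (Corollary 4.4): for diagonally dominant weight rows with
zero row sums at the interior points `I`, under the connectivity condition linking every
interior point to the boundary-neighbor set `B`, any `v` with `(Lv)(i) ≤ 0` on `I`
attains its minimum over `I ∪ B` on `B`. -/
theorem discrete_minimum_principle
    {X : Type*} [Fintype X] [DecidableEq X] [Nonempty X]
    (I : Finset X) (hI : I.Nonempty)
    (w : X → X → ℝ)
    (hdiag : ∀ i ∈ I, w i i < 0)
    (hoff : ∀ i ∈ I, ∀ j, j ≠ i → 0 ≤ w i j)
    (hsum : ∀ i ∈ I, ∑ j, w i j = 0)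
    (B : Finset X)
    (hB : ∀ j, j ∈ B ↔ j ∉ I ∧ ∃ i ∈ I, w i j ≠ 0)
    (hconn : ∀ i ∈ I, ∃ (m : ℕ) (c : ℕ → X),
      c 0 = i ∧ (∀ r < m, c r ∈ I) ∧ (∀ r < m, 0 < w (c r) (c (r + 1))) ∧ c m ∈ B)
    (v : X → ℝ)
    (hLv : ∀ i ∈ I, ∑ j, w i j * v j ≤ 0) :
    ∃ hBne : B.Nonempty,
      (I ∪ B).inf' (hI.mono Finset.subset_union_left) v = B.inf' hBne v := by
  classical
  obtain ⟨i0, hi0⟩ := hI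
  obtain ⟨m0, c0, _, _, _, hc0B⟩ := hconn i0 hi0
  have hBne : B.Nonempty := ⟨c0 m0, hc0B⟩
  refine ⟨hBne, ?_⟩
  set hne := (Finset.Nonempty.mono Finset.subset_union_left ⟨i0, hi0⟩ : (I ∪ B).Nonempty)
  set M := (I ∪ B).inf' hne v with hM
  have key : ∀ i ∈ I, v i = M → ∀ j, 0 < w i j → v j = M := by
    intro i hiI hvi j hwj
    have hji : j ≠ i := by
      intro h
      rw [h] at hwj
      exact absurd hwj (not_lt.2 (hdiag i hiI).le)
    have hnn : ∀ k ∈ Finset.univ, 0 ≤ w i k * (v k - v i) := by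
      intro k _
      by_cases hki : k = i
      · subst hki; simp
      · rcases eq_or_lt_of_le (hoff i hiI k hki) with h0 | hpos
        · rw [← h0]; simp
        · have hkIB : k ∈ I ∪ B := by
            by_cases hkI : k ∈ I
            · exact Finset.mem_union_left _ hkI
            · exact Finset.mem_union_right _ ((hB k).2 ⟨hkI, i, hiI, ne_of_gt hpos⟩)
          have hMk : M ≤ v k := Finset.inf'_le v hkIB
          nlinarith
    have hsum0 : ∑ k, w i k * (v k - v i) ≤ 0 := by
      have heq : ∑ k, w i k * (v k - v i)
          = (∑ k, w i k * v k) - (∑ k, w i k) * v i := by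
        rw [Finset.sum_mul]
        rw [← Finset.sum_sub_distrib]
        congr 1; ext k; ring
      rw [heq, hsum i hiI]
      simpa using hLv i hiI
    have hall := (Finset.sum_eq_zero_iff_of_nonneg hnn).1
      (le_antisymm hsum0 (Finset.sum_nonneg hnn))
    have hj0 := hall j (Finset.mem_univ j)
    rcases mul_eq_zero.1 hj0 with h | h
    · exact absurd h (ne_of_gt hwj)
    · linarith
  obtain ⟨x, hxIB, hxM⟩ := Finset.exists_mem_eq_inf' hne v
  have hbex : ∃ b ∈ B, v b = M := by
    rcases Finset.mem_union.1 hxIB with hxI | hxB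
    · obtain ⟨m, c, hc0, hcI, hcw, hcmB⟩ := hconn x hxI
      have hchain : ∀ r, r ≤ m → v (c r) = M := by
        intro r
        induction r with
        | zero => intro _; rw [hc0]; exact hxM.symm
        | succ n ih =>
          intro hn
          have hnm : n < m := Nat.lt_of_succ_le hn
          exact key (c n) (hcI n hnm) (ih hnm.le) (c (n + 1)) (hcw n hnm)
      exact ⟨c m, hcmB, hchain m le_rfl⟩
    · exact ⟨x, hxB, hxM.symm⟩
  obtain ⟨b, hbB, hbM⟩ := hbex
  refine le_antisymm ?_ ?_
  · exact Finset.le_inf' hBne v fun k hk =>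
      Finset.inf'_le v (Finset.mem_union_right _ hk)
  · calc B.inf' hBne v ≤ v b := Finset.inf'_le v hbB
      _ = M := hbM
end

section
/- Let X be a finite nonempty index set and I ⊆ X a nonempty subset (the 'interior' points). For each i ∈ I let w_i : X → ℝ be a row of weights satisfying: (i) w_i(i) < 0; (ii) w_i(j) ≥ 0 for every j ≠ i; (iii) ∑_{j ∈ X} w_i(j) = 0. Define the boundary-neighbor set B := { j ∈ X \ I : w_i(j) ≠ 0 for some i ∈ I }. Assume the connectivity condition: for every i ∈ I there is a finite chain i = i_0, i_1, …, i_m with i_r ∈ I and w_{i_r}(i_{r+1}) > 0 for every r < m, and i_m ∈ B. Then the square matrix (w_i(j))_{i,j ∈ I} is invertible; equivalently, the only function u : I → ℝ satisfying ∑_{j ∈ I} w_i(j) u(j) = 0 for all i ∈ I is u ≡ 0. -/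
/-- Well-posedness of the volume-constrained discrete Poisson system: the interior block
`(w i j)_{i,j ∈ I}` of the stabilized Laplacian matrix is invertible; equivalently the
only `u` with `∑_{j ∈ I} w i j * u j = 0` for all `i ∈ I` vanishes on `I`. -/
theorem interior_block_invertible
    {X : Type*} [Fintype X] [DecidableEq X] [Nonempty X]
    (I : Finset X) (hI : I.Nonempty)
    (w : X → X → ℝ)
    (hdiag : ∀ i ∈ I, w i i < 0)
    (hoff : ∀ i ∈ I, ∀ j, j ≠ i → 0 ≤ w i j)
    (hsum : ∀ i ∈ I, ∑ j, w i j = 0)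
    (B : Finset X)
    (hB : ∀ j, j ∈ B ↔ j ∉ I ∧ ∃ i ∈ I, w i j ≠ 0)
    (hconn : ∀ i ∈ I, ∃ (m : ℕ) (c : ℕ → X),
      c 0 = i ∧ (∀ r < m, c r ∈ I) ∧ (∀ r < m, 0 < w (c r) (c (r + 1))) ∧ c m ∈ B) :
    IsUnit (Matrix.of fun i j : {x // x ∈ I} => w i j) ∧
    ∀ u : X → ℝ, (∀ i ∈ I, ∑ j ∈ I, w i j * u j = 0) → ∀ j ∈ I, u j = 0 := by
  -- maximum principle: any kernel element is ≤ 0 on I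
  have key : ∀ u : X → ℝ, (∀ i ∈ I, ∑ j ∈ I, w i j * u j = 0) → ∀ j ∈ I, u j ≤ 0 := by
    intro u hu j hj
    set v : X → ℝ := fun x => if x ∈ I then u x else 0 with hv
    have hveq : ∀ i ∈ I, ∑ x, w i x * v x = 0 := by
      intro i hi
      rw [← hu i hi, ← Finset.sum_subset (Finset.subset_univ I)]
      · exact Finset.sum_congr rfl fun x hx => by simp [hv, hx]
      · intro x _ hx; simp [hv, hx]
    obtain ⟨i₀, -, hmax⟩ := Finset.exists_max_image Finset.univ v ⟨j, Finset.mem_univ j⟩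
    have hmax' : ∀ x, v x ≤ v i₀ := fun x => hmax x (Finset.mem_univ x)
    -- propagation of the maximum
    have prop : ∀ i ∈ I, v i = v i₀ → ∀ k, 0 < w i k → v k = v i₀ := by
      intro i hi hvi k hk
      have h1 : ∑ x, w i x * (v x - v i₀) = 0 := by
        have := hveq i hi
        have h2 := hsum i hi
        simp only [mul_sub, Finset.sum_sub_distrib, this, ← Finset.sum_mul, h2]
        ring
      have hnp : ∀ x ∈ Finset.univ, w i x * (v x - v i₀) ≤ 0 := by
        intro x _
        by_cases hx : x = i
        · subst hx; rw [hvi]; simp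
        · have := hoff i hi x hx
          have := hmax' x
          nlinarith
      have h0 := (Finset.sum_eq_zero_iff_of_nonpos hnp).mp h1 k (Finset.mem_univ k)
      rcases mul_eq_zero.mp h0 with h | h
      · exact absurd h (ne_of_gt hk)
      · linarith [hmax' k]
    -- the maximum is ≤ 0
    have hM : v i₀ ≤ 0 := by
      by_cases hi₀ : i₀ ∈ I
      · obtain ⟨m, c, hc0, hcI, hcw, hcB⟩ := hconn i₀ hi₀
        have hchain : ∀ r, r ≤ m → v (c r) = v i₀ := by
          intro r
          induction r with
          | zero => intro _; rw [hc0]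
          | succ r ih =>
            intro hr
            exact prop (c r) (hcI r (by omega)) (ih (by omega)) _ (hcw r (by omega))
        have hcm : c m ∉ I := ((hB (c m)).mp hcB).1
        have : v (c m) = 0 := by simp [hv, hcm]
        rw [← hchain m le_rfl, this]
      · have : v i₀ = 0 := by simp [hv, hi₀]
        rw [this]
    have : u j = v j := by simp [hv, hj]
    rw [this]
    exact le_trans (hmax' j) hM
  have ker : ∀ u : X → ℝ, (∀ i ∈ I, ∑ j ∈ I, w i j * u j = 0) → ∀ j ∈ I, u j = 0 := by
    intro u hu j hj
    have h1 := key u hu j hj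
    have h2 := key (-u) (by
      intro i hi
      have := hu i hi
      simp only [Pi.neg_apply, mul_neg, Finset.sum_neg_distrib, this, neg_zero]) j hj
    simp only [Pi.neg_apply, neg_nonpos] at h2
    linarith
  refine ⟨?_, ker⟩
  set A : Matrix {x // x ∈ I} {x // x ∈ I} ℝ := Matrix.of fun i j : {x // x ∈ I} => w i j with hA
  rw [Matrix.isUnit_iff_isUnit_det, isUnit_iff_ne_zero]
  intro hdet
  obtain ⟨v, hv0, hmv⟩ := (Matrix.exists_mulVec_eq_zero_iff).mpr hdet
  set u : X → ℝ := fun x => if h : x ∈ I then v ⟨x, h⟩ else 0 with hu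
  have hker : ∀ i ∈ I, ∑ j ∈ I, w i j * u j = 0 := by
    intro i hi
    have : ∑ j ∈ I, w i j * u j = ∑ j : {x // x ∈ I}, w i j * v j := by
      rw [← Finset.sum_coe_sort I (fun j => w i j * u j)]
      refine Finset.sum_congr rfl fun x _ => ?_
      simp [hu, x.2]
    rw [this]
    have := congrFun hmv ⟨i, hi⟩
    simpa [Matrix.mulVec, dotProduct, hA] using this
  apply hv0
  funext k
  have := ker u hker k.1 k.2
  simpa [hu, k.2] using this
end

section
/- Let X be a finite nonempty index set and I ⊆ X a nonempty proper subset (the 'interior' points). For each i ∈ I let w_i : X → ℝ be a row of weights satisfying: (i) w_i(i) < 0; (ii) w_i(j) ≥ 0 for every j ≠ i; (iii) ∑_{j ∈ X} w_i(j) = 0. For v : X → ℝ define (Lv)(i) := ∑_{j ∈ X} w_i(j) v(j) for i ∈ I. Define the boundary-neighbor set B := { j ∈ X \ I : w_i(j) ≠ 0 for some i ∈ I }. Assume the connectivity condition: for every i ∈ I there is a finite chain i = i_0, i_1, …, i_m with i_r ∈ I and w_{i_r}(i_{r+1}) > 0 for every r < m, and i_m ∈ B. Let c ≥ 0, let v :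 X → ℝ satisfy v(j) ≥ 0 for all j ∈ X and (Lv)(i) ≤ −1/2 for all i ∈ I, and let e : X → ℝ satisfy |(Le)(i)| ≤ c for all i ∈ I. Then for every j ∈ I, |e(j)| ≤ 2c · max_{j' ∈ X} v(j') + max_{j' ∈ X \ I} |e(j')|. -/
/-- Discrete maximum principle: if `(Lg)(i) ≥ 0` on the interior `I`, then
`g` is bounded on `I` by its maximum over the complement. -/
lemma discrete_max_principle
    {X : Type*} [Fintype X] [DecidableEq X] [Nonempty X]
    (I : Finset X)
    (hproper : (Finset.univ \ I).Nonempty)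
    (w : X → X → ℝ)
    (hoff : ∀ i ∈ I, ∀ j, j ≠ i → 0 ≤ w i j)
    (hsum : ∀ i ∈ I, ∑ j, w i j = 0)
    (B : Finset X)
    (hB : ∀ j, j ∈ B ↔ j ∉ I ∧ ∃ i ∈ I, w i j ≠ 0)
    (hconn : ∀ i ∈ I, ∃ (m : ℕ) (c : ℕ → X),
      c 0 = i ∧ (∀ r < m, c r ∈ I) ∧ (∀ r < m, 0 < w (c r) (c (r + 1))) ∧ c m ∈ B)
    (g : X → ℝ) (hg : ∀ i ∈ I, 0 ≤ ∑ j, w i j * g j) :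
    ∀ j ∈ I, g j ≤ (Finset.univ \ I).sup' hproper g := by
  set M : ℝ := Finset.univ.sup' Finset.univ_nonempty g with hMdef
  have hM : ∀ x, g x ≤ M := fun x => Finset.le_sup' g (Finset.mem_univ x)
  -- propagation step
  have step : ∀ i ∈ I, g i = M → ∀ j, 0 < w i j → g j = M := by
    intro i hi hgi j hwij
    have hterms : ∀ k ∈ Finset.univ, w i k * (g k - M) ≤ 0 := by
      intro k _
      by_cases hk : k = i
      · subst hk; rw [hgi]; simp
      · exact mul_nonpos_of_nonneg_of_nonpos (hoff i hi k hk) (by linarith [hM k])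
    have hexp : ∑ k, w i k * (g k - M) = ∑ k, w i k * g k - M * ∑ k, w i k := by
      rw [Finset.mul_sum, ← Finset.sum_sub_distrib]
      apply Finset.sum_congr rfl; intro k _; ring
    have hsum0 : ∑ k, w i k * (g k - M) = 0 := by
      have h1 : 0 ≤ ∑ k, w i k * (g k - M) := by
        rw [hexp, hsum i hi]; simpa using hg i hi
      have h2 : ∑ k, w i k * (g k - M) ≤ 0 := Finset.sum_nonpos hterms
      linarith
    have := (Finset.sum_eq_zero_iff_of_nonpos hterms).mp hsum0 j (Finset.mem_univ j)
    have hgj : g j - M = 0 := by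
      rcases mul_eq_zero.mp this with h | h
      · exact absurd h (ne_of_gt hwij)
      · exact h
    linarith
  -- the maximum is attained at a point outside I
  obtain ⟨i0, _, hi0⟩ := Finset.exists_mem_eq_sup' (Finset.univ_nonempty (α := X)) g
  have hMout : ∃ x ∈ Finset.univ \ I, g x = M := by
    by_cases hi0I : i0 ∈ I
    · obtain ⟨m, ch, hc0, hcI, hcpos, hcB⟩ := hconn i0 hi0I
      have key : ∀ r, r ≤ m → g (ch r) = M := by
        intro r
        induction r with
        | zero => intro _; rw [hc0]; exact hi0.symm
        | succ r ih =>
          intro hr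
          exact step (ch r) (hcI r (by omega)) (ih (by omega)) _ (hcpos r (by omega))
      refine ⟨ch m, ?_, key m le_rfl⟩
      simp [Finset.mem_sdiff, ((hB (ch m)).mp hcB).1]
    · exact ⟨i0, by simp [Finset.mem_sdiff, hi0I], hi0.symm⟩
  obtain ⟨x, hx, hgx⟩ := hMout
  intro j _
  calc g j ≤ M := hM j
    _ = g x := hgx.symm
    _ ≤ (Finset.univ \ I).sup' hproper g := Finset.le_sup' g hx

/-- Discrete barrier (comparison-function) estimate from the proof of Theorem 4.5:
with a nonnegative barrier `v` satisfying `(Lv)(i) ≤ -1/2` on the interior `I` and an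
error vector `e` with `|(Le)(i)| ≤ c` on `I`, one has
`|e j| ≤ 2c · max v + max_{X \ I} |e|` for every interior point `j`. -/
theorem discrete_barrier_estimate
    {X : Type*} [Fintype X] [DecidableEq X] [Nonempty X]
    (I : Finset X) (hI : I.Nonempty)
    (hproper : (Finset.univ \ I).Nonempty)
    (w : X → X → ℝ)
    (hdiag : ∀ i ∈ I, w i i < 0)
    (hoff : ∀ i ∈ I, ∀ j, j ≠ i → 0 ≤ w i j)
    (hsum : ∀ i ∈ I, ∑ j, w i j = 0)
    (B : Finset X)
    (hB : ∀ j, j ∈ B ↔ j ∉ I ∧ ∃ i ∈ I, w i j ≠ 0)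
    (hconn : ∀ i ∈ I, ∃ (m : ℕ) (c : ℕ → X),
      c 0 = i ∧ (∀ r < m, c r ∈ I) ∧ (∀ r < m, 0 < w (c r) (c (r + 1))) ∧ c m ∈ B)
    (c : ℝ) (hc : 0 ≤ c)
    (v : X → ℝ)
    (hv0 : ∀ j, 0 ≤ v j)
    (hvL : ∀ i ∈ I, ∑ j, w i j * v j ≤ -(1 / 2))
    (e : X → ℝ)
    (heL : ∀ i ∈ I, |∑ j, w i j * e j| ≤ c) :
    ∀ j ∈ I, |e j| ≤
      2 * c * Finset.univ.sup' Finset.univ_nonempty v +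
        (Finset.univ \ I).sup' hproper (fun j' => |e j'|) := by
  set V : ℝ := Finset.univ.sup' Finset.univ_nonempty v with hVdef
  set K : ℝ := (Finset.univ \ I).sup' hproper (fun j' => |e j'|) with hKdef
  have hV : ∀ x, v x ≤ V := fun x => Finset.le_sup' v (Finset.mem_univ x)
  have hK : ∀ x ∈ Finset.univ \ I, |e x| ≤ K :=
    fun x hx => Finset.le_sup' (fun j' => |e j'|) hx
  -- expansion of L applied to (s•e - (2c v + K))
  have expand : ∀ (s : ℝ), ∀ i ∈ I,
      ∑ j, w i j * (s * e j - (2 * c * v j + K)) =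
        s * (∑ j, w i j * e j) - 2 * c * (∑ j, w i j * v j) - K * (∑ j, w i j) := by
    intro s i hi
    rw [Finset.mul_sum, Finset.mul_sum, Finset.mul_sum, ← Finset.sum_sub_distrib,
      ← Finset.sum_sub_distrib]
    apply Finset.sum_congr rfl; intro k _; ring
  have hLg : ∀ (s : ℝ), s = 1 ∨ s = -1 → ∀ i ∈ I,
      0 ≤ ∑ j, w i j * (s * e j - (2 * c * v j + K)) := by
    intro s hs i hi
    rw [expand s i hi, hsum i hi]
    have h1 := abs_le.mp (heL i hi)
    have h2 : -2 * c * (∑ j, w i j * v j) ≥ c := by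
      have := hvL i hi
      nlinarith
    rcases hs with rfl | rfl <;> nlinarith
  have hbound : ∀ (s : ℝ), s = 1 ∨ s = -1 → ∀ j ∈ I, s * e j ≤ 2 * c * V + K := by
    intro s hs j hj
    have hmp := discrete_max_principle I hproper w hoff hsum B hB hconn
      (fun x => s * e x - (2 * c * v x + K)) (hLg s hs) j hj
    have hout : (Finset.univ \ I).sup' hproper
        (fun x => s * e x - (2 * c * v x + K)) ≤ 0 := by
      apply Finset.sup'_le
      intro x hx
      have h1 := hK x hx
      have h3 : s * e x ≤ |e x| := by
        rcases hs with rfl | rfl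
        · simpa using le_abs_self (e x)
        · simpa using neg_le_abs (e x)
      nlinarith [hv0 x]
    have : s * e j - (2 * c * v j + K) ≤ 0 := le_trans hmp hout
    nlinarith [hv0 j, hV j]
  intro j hj
  rw [abs_le]
  constructor
  · have := hbound (-1) (Or.inr rfl) j hj; linarith
  · have := hbound 1 (Or.inl rfl) j hj; linarith
end
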